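/- Let (Y, d, H) be a metric measure space and X a metric measure space, F : Y → X a 1-Lipschitz measure-preserving map (vol(F(A)) = H(A)). Let p ∈ Y, ε, r_ε > 0 and suppose: (a) every ball B(q, r_ε) with q ∈ B(p, r) satisfies H(B(q, r_ε)) ≥ ϑ·ω_n r_εⁿ; (b) Bishop-Gromov relative volume comparison with ℍⁿ holds in Y; (c) balls in X of radius ≤ r_ε have volume exactly vol_{ℍⁿ}. Then there exists c(ε) → 0 as ε → 0 such that for all p₁, p₂ ∈ B(p, r) with d(p₁,p₂) < 2r_ε², d_X(F(p₁), F(p₂)) ≥ (1 − c(ε))·d(p₁, p₂). -/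

import Mathlib

open MeasureTheory

/-- Hyperbolic ball volume (up to the constant `vol(S^{n-1})`, shared with
`eucBallVol`). -/
noncomputable def hypBallVol (n : ℕ) (r : ℝ) : ℝ :=
  ∫ t in (0 : ℝ)..r, Real.sinh t ^ (n - 1)

/-- Euclidean ball volume `ω_n rⁿ` (same normalization as `hypBallVol`). -/
noncomputable def eucBallVol (n : ℕ) (r : ℝ) : ℝ :=
  ∫ t in (0 : ℝ)..r, t ^ (n - 1)

lemma euc_eq (n : ℕ) (hn : 1 ≤ n) (r : ℝ) : eucBallVol n r = r ^ n / n := by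
  rw [eucBallVol, integral_pow, Nat.sub_add_cancel hn]
  rw [zero_pow (by omega), Nat.cast_sub hn]
  push_cast
  ring

lemma sinh_le_mul_cosh {t : ℝ} (ht : 0 ≤ t) : Real.sinh t ≤ t * Real.cosh t := by
  have key : MonotoneOn (fun t : ℝ => t * Real.cosh t - Real.sinh t) (Set.Ici 0) := by
    apply monotoneOn_of_deriv_nonneg (convex_Ici 0)
    · fun_prop
    · fun_prop
    · intro x hx
      have hd : HasDerivAt (fun t : ℝ => t * Real.cosh t - Real.sinh t)
          (1 * Real.cosh x + x * Real.sinh x - Real.cosh x) x :=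
        ((hasDerivAt_id x).mul (Real.hasDerivAt_cosh x)).sub (Real.hasDerivAt_sinh x)
      rw [hd.deriv]
      have hx0 : 0 ≤ x := le_of_lt (by simpa using hx)
      nlinarith [Real.sinh_nonneg_iff.2 hx0]
  have := key (Set.self_mem_Ici) (Set.mem_Ici.2 ht) ht
  simpa using this

lemma euc_le_hyp (n : ℕ) {s : ℝ} (hs : 0 ≤ s) : eucBallVol n s ≤ hypBallVol n s := by
  apply intervalIntegral.integral_mono_on hs
  · exact (continuous_pow _).intervalIntegrable _ _
  · exact ((Real.continuous_sinh).pow _).intervalIntegrable _ _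
  · intro t ht
    have h1 : 0 ≤ t := ht.1
    exact pow_le_pow_left₀ h1 (Real.self_le_sinh_iff.2 h1) _

lemma hyp_le_cosh_euc (n : ℕ) {s R : ℝ} (hs : 0 ≤ s) (hsR : s ≤ R) :
    hypBallVol n s ≤ Real.cosh R ^ (n - 1) * eucBallVol n s := by
  have : Real.cosh R ^ (n-1) * eucBallVol n s
      = ∫ t in (0:ℝ)..s, Real.cosh R ^ (n-1) * t ^ (n-1) := by
    rw [eucBallVol, intervalIntegral.integral_const_mul]
  rw [this]
  apply intervalIntegral.integral_mono_on hs
  · exact ((Real.continuous_sinh).pow _).intervalIntegrable _ _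
  · exact ((continuous_const).mul (continuous_pow _)).intervalIntegrable _ _
  · intro t ht
    have h1 : 0 ≤ t := ht.1
    have h2 : Real.sinh t ≤ t * Real.cosh R := by
      calc Real.sinh t ≤ t * Real.cosh t := sinh_le_mul_cosh h1
      _ ≤ t * Real.cosh R := by
          apply mul_le_mul_of_nonneg_left _ h1
          exact Real.cosh_le_cosh.2 (by
            rw [abs_of_nonneg h1, abs_of_nonneg (h1.trans (ht.2.trans hsR))]
            exact ht.2.trans hsR)
    calc Real.sinh t ^ (n-1) ≤ (t * Real.cosh R)^(n-1) :=
          pow_le_pow_left₀ (Real.sinh_nonneg_iff.2 h1) h2 _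
    _ = Real.cosh R ^ (n-1) * t ^ (n-1) := by ring

set_option maxHeartbeats 1600000 in
/-- Lemma 4.4: a `1`-Lipschitz measure-preserving map from an almost-Euclidean region
of a metric measure space satisfying Bishop–Gromov comparison with `ℍⁿ` into a space
whose small balls have exactly hyperbolic volume is locally almost bi-Lipschitz:
`d(F p₁, F p₂) ≥ (1 − c(ε)) d(p₁, p₂)`, with `c(ε) → 0` as `ε → 0`. -/
theorem stmt_12 (n : ℕ) (hn : 1 ≤ n) :
    ∃ c : ℝ → ℝ,
      Filter.Tendsto c (nhdsWithin 0 (Set.Ioi 0)) (nhds 0) ∧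
      ∀ (ε : ℝ), 0 < ε → ε < 1 →
      ∀ (Y : Type) (_ : MetricSpace Y) (_ : MeasurableSpace Y), BorelSpace Y →
      ∀ (X : Type) (_ : MetricSpace X) (_ : MeasurableSpace X), BorelSpace X →
      ∀ (Hm : Measure Y) (vol : Measure X) (F : Y → X),
        LipschitzWith 1 F →
        (∀ A : Set Y, MeasurableSet A → vol (F '' A) = Hm A) →
        ∀ (p : Y) (r rε ϑ : ℝ), 0 < rε → rε ≤ ε → 1 - ε ≤ ϑ →
        -- (a) almost-Euclidean lower volume bound on balls of radius rε around B(p,r)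
        (∀ q : Y, q ∈ Metric.ball p r →
          ϑ * eucBallVol n rε ≤ (Hm (Metric.ball q rε)).toReal) →
        -- (b) Bishop–Gromov comparison with ℍⁿ in Y
        (∀ (y : Y) (r₁ r₂ : ℝ), 0 < r₁ → r₁ ≤ r₂ →
          hypBallVol n r₁ * (Hm (Metric.ball y r₂)).toReal ≤
            hypBallVol n r₂ * (Hm (Metric.ball y r₁)).toReal) →
        -- (c) balls in X of radius ≤ rε have exactly hyperbolic volume
        (∀ (x : X) (s : ℝ), 0 < s → s ≤ rε →
          (vol (Metric.ball x s)).toReal = hypBallVol n s ∧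
            vol (Metric.ball x s) ≠ ⊤) →
        -- X has (approximate) midpoints
        (∀ x₁ x₂ : X, ∃ x : X,
          dist x x₁ ≤ dist x₁ x₂ / 2 ∧ dist x x₂ ≤ dist x₁ x₂ / 2) →
        ∀ p₁ p₂ : Y, p₁ ∈ Metric.ball p r → p₂ ∈ Metric.ball p r →
          dist p₁ p₂ < 2 * rε ^ 2 →
          (1 - c ε) * dist p₁ p₂ ≤ dist (F p₁) (F p₂) := by
  classical
  set g : ℝ → ℝ :=
    fun ε => ((Real.cosh ε ^ (n-1))^2 / (1 - ε) - 1) ^ ((n:ℝ)⁻¹) with hgdef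
  have hninv : (0:ℝ) < (n:ℝ)⁻¹ := by
    have : (0:ℝ) < (n:ℝ) := by exact_mod_cast Nat.pos_of_ne_zero (by omega)
    positivity
  refine ⟨fun ε => max (3*ε) (2 * g ε), ?_, ?_⟩
  · -- tendsto
    have h0 : Filter.Tendsto (fun ε : ℝ => 3*ε) (nhds 0) (nhds 0) := by
      have := Filter.Tendsto.const_mul (3:ℝ) (Filter.tendsto_id (x := nhds (0:ℝ)))
      simpa using this
    have hbase : Filter.Tendsto
        (fun ε : ℝ => (Real.cosh ε ^ (n-1))^2 / (1 - ε) - 1) (nhds 0) (nhds 0) := by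
      have hct : ContinuousAt
          (fun ε : ℝ => (Real.cosh ε ^ (n-1))^2 / (1 - ε) - 1) 0 := by
        apply ContinuousAt.sub
        · apply ContinuousAt.div
          · fun_prop
          · fun_prop
          · norm_num
        · exact continuousAt_const
      have := hct.tendsto
      simpa [Real.cosh_zero] using this
    have hr : ContinuousAt (fun x : ℝ => x ^ ((n:ℝ)⁻¹)) 0 :=
      Real.continuousAt_rpow_const 0 _ (Or.inr hninv.le)
    have hgt : Filter.Tendsto g (nhds 0) (nhds 0) := by
      have := hr.tendsto.comp hbase
      simpa [hgdef, Function.comp_def, Real.zero_rpow (ne_of_gt hninv)] using this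
    have hmax := h0.max (hgt.const_mul 2)
    have : max 0 (2*(0:ℝ)) = 0 := by norm_num
    rw [this] at hmax
    exact hmax.mono_left nhdsWithin_le_nhds
  · intro ε hε hε1 Y _iY _imY _hbY X _iX _imX _hbX Hm vol F hF hmp p r rε ϑ hrε hrεε hϑ
      ha hb hc _hmid p₁ p₂ hp₁ hp₂ hdlt
    set cε := max (3*ε) (2 * g ε) with hcε
    by_cases hc1 : 1 ≤ cε
    · have h1 : 1 - cε ≤ 0 := by linarith
      have h2 : (0:ℝ) ≤ dist (F p₁) (F p₂) := dist_nonneg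
      nlinarith [dist_nonneg (x := p₁) (y := p₂)]
    push_neg at hc1
    have hε3 : ε < 1/3 := by
      have : 3*ε ≤ cε := le_max_left _ _
      linarith
    have hcε0 : 0 ≤ cε := le_trans (by linarith) (le_max_left _ _)
    set d := dist p₁ p₂ with hd_def
    set δ := dist (F p₁) (F p₂) with hδ_def
    have hδd : δ ≤ d := by
      have := hF.dist_le_mul p₁ p₂
      simpa [hδ_def, hd_def] using this
    have hd0 : 0 ≤ d := dist_nonneg
    have hδ0 : 0 ≤ δ := dist_nonneg
    rcases eq_or_lt_of_le hδd with heq | hlt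
    · rw [heq]; nlinarith
    have hdpos : 0 < d := lt_of_le_of_lt hδ0 hlt
    set s := (d + δ)/2 with hs_def
    set t := (d - δ)/2 with ht_def
    have hs0 : 0 < s := by positivity
    have ht0 : 0 < t := by rw [ht_def]; linarith
    have hsd : s ≤ d := by rw [hs_def]; linarith
    have hrε3 : rε ≤ 1/3 := hrεε.trans hε3.le
    have hsrε : s ≤ rε := by nlinarith
    have htrε : t ≤ rε := by rw [ht_def]; rw [hs_def] at hsrε; linarith
    have hε1' : (0:ℝ) < 1 - ε := by linarith
    have hC0 : (0:ℝ) < Real.cosh ε ^ (n-1) := by positivity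
    have hcosh_rε_ε : Real.cosh rε ^ (n-1) ≤ Real.cosh ε ^ (n-1) := by
      apply pow_le_pow_left₀ (Real.cosh_pos (x := rε)).le
      exact Real.cosh_le_cosh.2 (by
        rw [abs_of_nonneg hrε.le, abs_of_nonneg (hrε.le.trans hrεε)]
        exact hrεε)
    have heuc_rε : 0 < eucBallVol n rε := by rw [euc_eq n hn]; positivity
    -- lower volume bound at all radii ≤ rε
    have hlow : ∀ q : Y, q ∈ Metric.ball p r → ∀ u : ℝ, 0 < u → u ≤ rε →
        (1 - ε) * eucBallVol n u ≤
          Real.cosh ε ^ (n-1) * (Hm (Metric.ball q u)).toReal := by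
      intro q hq u hu hurε
      have hBG := hb q u rε hu hurε
      have hA := ha q hq
      have heu : 0 < eucBallVol n u := by rw [euc_eq n hn]; positivity
      have h1 : eucBallVol n u ≤ hypBallVol n u := euc_le_hyp n hu.le
      have h2 : hypBallVol n rε ≤ Real.cosh rε ^ (n-1) * eucBallVol n rε :=
        hyp_le_cosh_euc n hrε.le le_rfl
      have hBu : 0 ≤ (Hm (Metric.ball q u)).toReal := ENNReal.toReal_nonneg
      have hhu0 : 0 ≤ hypBallVol n u := heu.le.trans h1
      have step1 : hypBallVol n u * ((1-ε) * eucBallVol n rε)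
          ≤ hypBallVol n u * (Hm (Metric.ball q rε)).toReal := by
        apply mul_le_mul_of_nonneg_left _ hhu0
        calc (1-ε) * eucBallVol n rε ≤ ϑ * eucBallVol n rε :=
              mul_le_mul_of_nonneg_right hϑ heuc_rε.le
        _ ≤ _ := hA
      have step2 : hypBallVol n rε * (Hm (Metric.ball q u)).toReal
          ≤ (Real.cosh ε ^ (n-1) * eucBallVol n rε) * (Hm (Metric.ball q u)).toReal := by
        apply mul_le_mul_of_nonneg_right _ hBu
        exact h2.trans (mul_le_mul_of_nonneg_right hcosh_rε_ε heuc_rε.le)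
      have hcomb := (step1.trans hBG).trans step2
      -- divide by eucBallVol n rε > 0
      have hcomb' : (hypBallVol n u * (1-ε)) * eucBallVol n rε
          ≤ (Real.cosh ε ^ (n-1) * (Hm (Metric.ball q u)).toReal) * eucBallVol n rε := by
        ring_nf
        ring_nf at hcomb
        linarith
      have hdiv : hypBallVol n u * (1-ε)
          ≤ Real.cosh ε ^ (n-1) * (Hm (Metric.ball q u)).toReal :=
        le_of_mul_le_mul_right hcomb' heuc_rε
      have h6 : (1-ε) * eucBallVol n u ≤ (1-ε) * hypBallVol n u :=
        mul_le_mul_of_nonneg_left h1 hε1'.le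
      linarith
    -- disjoint balls and image containment
    have hdisj : Disjoint (Metric.ball p₁ s) (Metric.ball p₂ t) := by
      rw [Set.disjoint_left]
      intro y hy₁ hy₂
      rw [Metric.mem_ball] at hy₁ hy₂
      have htri : d ≤ dist y p₁ + dist y p₂ := by
        rw [hd_def, dist_comm y p₁]
        exact dist_triangle p₁ y p₂
      rw [hs_def] at hy₁; rw [ht_def] at hy₂
      linarith
    have hmeas₁ : MeasurableSet (Metric.ball p₁ s) := Metric.isOpen_ball.measurableSet
    have hmeas₂ : MeasurableSet (Metric.ball p₂ t) := Metric.isOpen_ball.measurableSet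
    have himg : F '' (Metric.ball p₁ s ∪ Metric.ball p₂ t) ⊆ Metric.ball (F p₁) s := by
      rintro x ⟨y, hy, rfl⟩
      rw [Metric.mem_ball]
      rcases hy with hy | hy
      · rw [Metric.mem_ball] at hy
        calc dist (F y) (F p₁) ≤ dist y p₁ := by simpa using hF.dist_le_mul y p₁
        _ < s := hy
      · rw [Metric.mem_ball] at hy
        have h1 : dist (F y) (F p₂) ≤ dist y p₂ := by simpa using hF.dist_le_mul y p₂
        have h2 : dist (F y) (F p₁) ≤ dist (F y) (F p₂) + δ := by
          rw [hδ_def, dist_comm (F p₁) (F p₂)]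
          exact dist_triangle (F y) (F p₂) (F p₁)
        rw [hs_def]; rw [ht_def] at hy
        linarith
    obtain ⟨hXvol, hXfin⟩ := hc (F p₁) s hs0 hsrε
    have hunion_le : Hm (Metric.ball p₁ s ∪ Metric.ball p₂ t)
        ≤ vol (Metric.ball (F p₁) s) := by
      rw [← hmp _ (hmeas₁.union hmeas₂)]
      exact measure_mono himg
    have hadd : Hm (Metric.ball p₁ s ∪ Metric.ball p₂ t)
        = Hm (Metric.ball p₁ s) + Hm (Metric.ball p₂ t) := measure_union hdisj hmeas₂
    have hfin₁ : Hm (Metric.ball p₁ s) ≠ ⊤ := by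
      intro h
      apply hXfin
      have : Hm (Metric.ball p₁ s) ≤ vol (Metric.ball (F p₁) s) :=
        le_trans (by rw [hadd]; exact le_self_add) hunion_le
      rw [h] at this
      exact top_le_iff.1 this
    have hfin₂ : Hm (Metric.ball p₂ t) ≠ ⊤ := by
      intro h
      apply hXfin
      have : Hm (Metric.ball p₂ t) ≤ vol (Metric.ball (F p₁) s) :=
        le_trans (by rw [hadd]; exact le_add_self) hunion_le
      rw [h] at this
      exact top_le_iff.1 this
    have key : (Hm (Metric.ball p₁ s)).toReal + (Hm (Metric.ball p₂ t)).toReal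
        ≤ hypBallVol n s := by
      rw [← hXvol, ← ENNReal.toReal_add hfin₁ hfin₂, ← hadd]
      exact ENNReal.toReal_mono hXfin hunion_le
    have l1 := hlow p₁ hp₁ s hs0 hsrε
    have l2 := hlow p₂ hp₂ t ht0 htrε
    have h2 : hypBallVol n s ≤ Real.cosh rε ^ (n-1) * eucBallVol n s :=
      hyp_le_cosh_euc n hs0.le hsrε
    have heucs : 0 < eucBallVol n s := by rw [euc_eq n hn]; positivity
    have main : (1-ε) * (eucBallVol n s + eucBallVol n t)
        ≤ (Real.cosh ε ^ (n-1))^2 * eucBallVol n s := by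
      have e1 := mul_le_mul_of_nonneg_left key hC0.le
      rw [mul_add] at e1
      have e2 := mul_le_mul_of_nonneg_left h2 hC0.le
      have e3 : Real.cosh rε ^ (n-1) * eucBallVol n s
          ≤ Real.cosh ε ^ (n-1) * eucBallVol n s :=
        mul_le_mul_of_nonneg_right hcosh_rε_ε heucs.le
      have e4 := mul_le_mul_of_nonneg_left e3 hC0.le
      calc (1-ε) * (eucBallVol n s + eucBallVol n t)
          = (1-ε) * eucBallVol n s + (1-ε) * eucBallVol n t := by ring
      _ ≤ Real.cosh ε ^ (n-1) * (Hm (Metric.ball p₁ s)).toReal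
          + Real.cosh ε ^ (n-1) * (Hm (Metric.ball p₂ t)).toReal := add_le_add l1 l2
      _ ≤ Real.cosh ε ^ (n-1) * hypBallVol n s := e1
      _ ≤ Real.cosh ε ^ (n-1) * (Real.cosh rε ^ (n-1) * eucBallVol n s) := e2
      _ ≤ Real.cosh ε ^ (n-1) * (Real.cosh ε ^ (n-1) * eucBallVol n s) := e4
      _ = (Real.cosh ε ^ (n-1))^2 * eucBallVol n s := by ring
    -- translate to powers
    have hn0 : (0:ℝ) < (n:ℝ) := by exact_mod_cast Nat.pos_of_ne_zero (by omega)
    have main2 : (1-ε) * (s^n + t^n) ≤ (Real.cosh ε ^ (n-1))^2 * s^n := by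
      rw [euc_eq n hn, euc_eq n hn] at main
      have h := mul_le_mul_of_nonneg_right main hn0.le
      have hnne : (n:ℝ) ≠ 0 := hn0.ne'
      calc (1-ε) * (s^n + t^n) = ((1-ε) * (s^n/(n:ℝ) + t^n/(n:ℝ))) * n := by
            field_simp
      _ ≤ ((Real.cosh ε ^ (n-1))^2 * (s^n/(n:ℝ))) * n := h
      _ = (Real.cosh ε ^ (n-1))^2 * s^n := by field_simp
    set G := (Real.cosh ε ^ (n-1))^2 / (1 - ε) - 1 with hGdef
    have hG0 : 0 ≤ G := by
      have h1 : 1 ≤ (Real.cosh ε ^ (n-1))^2 := by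
        have := Real.one_le_cosh ε
        have : (1:ℝ) ≤ Real.cosh ε ^ (n-1) := one_le_pow₀ this
        nlinarith
      have h2 : (1:ℝ) ≤ (Real.cosh ε ^ (n-1))^2 / (1-ε) := by
        rw [le_div_iff₀ hε1']
        nlinarith
      rw [hGdef]; linarith
    have hsn : (0:ℝ) ≤ s^n := by positivity
    have htGs : t^n ≤ G * s^n := by
      have hkey : (t^n + s^n) * (1-ε) ≤ (Real.cosh ε ^ (n-1))^2 * s^n := by
        linarith [main2]
      have hid : (1-ε) * G = (Real.cosh ε ^ (n-1))^2 - (1-ε) := by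
        rw [hGdef]; field_simp
      have h4 : (1-ε) * t^n ≤ (1-ε) * (G * s^n) := by
        have hrw : (1-ε) * (G*s^n) = ((1-ε)*G)*s^n := by ring
        rw [hrw, hid]
        linarith [main2]
      exact le_of_mul_le_mul_left h4 hε1'
    have ht_le : t ≤ g ε * s := by
      have hne : n ≠ 0 := by omega
      have h1 : (t:ℝ) = (t^n) ^ ((n:ℝ)⁻¹) :=
        (Real.pow_rpow_inv_natCast ht0.le hne).symm
      have h2' : (t^n)^((n:ℝ)⁻¹) ≤ (G*s^n)^((n:ℝ)⁻¹) :=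
        Real.rpow_le_rpow (by positivity) htGs hninv.le
      have h3' : (G*s^n)^((n:ℝ)⁻¹) = G^((n:ℝ)⁻¹) * (s^n)^((n:ℝ)⁻¹) :=
        Real.mul_rpow hG0 hsn
      have h4' : (s^n)^((n:ℝ)⁻¹) = s := Real.pow_rpow_inv_natCast hs0.le hne
      have h5' : g ε = G^((n:ℝ)⁻¹) := by rw [hgdef, hGdef]
      rw [h1, h5']
      rw [h3', h4'] at h2'
      exact h2'
    have hgε0 : 0 ≤ g ε := by
      have : g ε = G^((n:ℝ)⁻¹) := by rw [hgdef, hGdef]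
      rw [this]
      exact Real.rpow_nonneg hG0 _
    have hts : t ≤ g ε * d := ht_le.trans (mul_le_mul_of_nonneg_left hsd hgε0)
    have h2g : 2 * g ε ≤ cε := le_max_right _ _
    have hfinal : (1 - cε) * d ≤ (1 - 2 * g ε) * d := by
      apply mul_le_mul_of_nonneg_right _ hd0
      linarith
    calc (1 - cε) * d ≤ (1 - 2*g ε) * d := hfinal
    _ ≤ δ := by rw [ht_def] at hts; nlinarith
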